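/- Let f(x) = ½xᵀx + bᵀx + λ₁‖x‖₂ with λ₁ ≥ 0 and b ∈ ℝⁿ. Then x = 0 minimizes f if and only if ‖b‖₂ ≤ λ₁; and if ‖b‖₂ > λ₁, the unique minimizer is x⁰ = −(1 − λ₁/‖b‖₂)·b. -/

import Mathlib

set_option maxHeartbeats 1000000


open Finset

theorem stmt_14 (n : ℕ) (b : Fin n → ℝ) (lam1 : ℝ) (hlam1 : 0 ≤ lam1)
    (f : (Fin n → ℝ) → ℝ)
    (hf : ∀ x, f x = (1/2) * ∑ i, (x i)^2 + ∑ i, b i * x i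
      + lam1 * Real.sqrt (∑ i, (x i)^2)) :
    ((∀ x, f 0 ≤ f x) ↔ Real.sqrt (∑ i, (b i)^2) ≤ lam1) ∧
    (lam1 < Real.sqrt (∑ i, (b i)^2) →
      (∀ x, f (fun i => -(1 - lam1 / Real.sqrt (∑ i, (b i)^2)) * b i) ≤ f x) ∧
      (∀ x, (∀ x', f x ≤ f x') →
        x = fun i => -(1 - lam1 / Real.sqrt (∑ i, (b i)^2)) * b i)) := by
  set r : ℝ := Real.sqrt (∑ i, (b i)^2) with hr
  have hS : ∀ x : Fin n → ℝ, (0:ℝ) ≤ ∑ i, (x i)^2 :=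
    fun x => Finset.sum_nonneg fun i _ => sq_nonneg _
  have hr0 : 0 ≤ r := Real.sqrt_nonneg _
  have hr2 : r^2 = ∑ i, (b i)^2 := Real.sq_sqrt (hS b)
  have hnx2 : ∀ x : Fin n → ℝ, Real.sqrt (∑ i, (x i)^2) ^ 2 = ∑ i, (x i)^2 :=
    fun x => Real.sq_sqrt (hS x)
  have hnx0 : ∀ x : Fin n → ℝ, 0 ≤ Real.sqrt (∑ i, (x i)^2) :=
    fun x => Real.sqrt_nonneg _
  -- Cauchy-Schwarz: -(r * ‖x‖) ≤ ∑ b i * x i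
  have hCS : ∀ x : Fin n → ℝ, -(r * Real.sqrt (∑ i, (x i)^2)) ≤ ∑ i, b i * x i := by
    intro x
    have h := Finset.sum_mul_sq_le_sq_mul_sq Finset.univ b x
    nlinarith [hnx2 x, hnx0 x, sq_nonneg ((∑ i, b i * x i) + r * Real.sqrt (∑ i, (x i)^2)),
      mul_nonneg hr0 (hnx0 x)]
  have hf0 : f 0 = 0 := by
    rw [hf]; simp
  -- the candidate minimizer
  set c : ℝ := 1 - lam1 / r with hc
  set x0 : Fin n → ℝ := fun i => -c * b i with hx0
  -- value of f at x0 when lam1 < r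
  have hfx0 : lam1 < r → f x0 = -(1/2) * (r - lam1)^2 := by
    intro hlr
    have hrpos : 0 < r := lt_of_le_of_lt hlam1 hlr
    have hc0 : 0 ≤ c := by
      rw [hc]
      have : lam1 / r ≤ 1 := by
        rw [div_le_one hrpos]; exact hlr.le
      linarith
    have hcr : c * r = r - lam1 := by
      rw [hc, sub_mul, div_mul_cancel₀ _ hrpos.ne', one_mul]
    have h1 : ∑ i, (x0 i)^2 = c^2 * r^2 := by
      rw [hr2, Finset.mul_sum]
      exact Finset.sum_congr rfl fun i _ => by rw [hx0]; ring
    have h2 : ∑ i, b i * x0 i = -c * r^2 := by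
      rw [hr2, Finset.mul_sum]
      exact Finset.sum_congr rfl fun i _ => by rw [hx0]; ring
    have h3 : Real.sqrt (∑ i, (x0 i)^2) = c * r := by
      rw [h1]
      rw [show c^2 * r^2 = (c*r)^2 by ring]
      exact Real.sqrt_sq (mul_nonneg hc0 hrpos.le)
    rw [hf, h3, h1, h2]
    linear_combination (1/2*(c*r - r + lam1)) * hcr
  -- lower bound: f x ≥ -(1/2)*(r-lam1)^2 when lam1 ≤ r
  have hlow : lam1 ≤ r → ∀ x, -(1/2) * (r - lam1)^2 ≤ f x := by
    intro hlr x
    have h := hCS x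
    rw [hf]
    nlinarith [hnx2 x, hnx0 x, sq_nonneg (Real.sqrt (∑ i, (x i)^2) - (r - lam1))]
  constructor
  · constructor
    · intro hmin
      by_contra hlt
      push_neg at hlt
      have h0 := hmin x0
      rw [hfx0 hlt, hf0] at h0
      nlinarith
    · intro hle x
      rw [hf0, hf]
      have h := hCS x
      nlinarith [hnx2 x, hnx0 x, mul_nonneg (sub_nonneg.2 hle) (hnx0 x)]
  · intro hlr
    have hrpos : 0 < r := lt_of_le_of_lt hlam1 hlr
    have hmin0 : ∀ x, f x0 ≤ f x := by
      intro x
      rw [hfx0 hlr]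
      exact hlow hlr.le x
    refine ⟨fun x => by simpa [hx0, hc] using hmin0 x, ?_⟩
    intro x hxmin
    have heq : f x = -(1/2) * (r - lam1)^2 := by
      have h1 := hxmin x0
      rw [hfx0 hlr] at h1
      exact le_antisymm h1 (hlow hlr.le x)
    -- equality analysis
    set nx : ℝ := Real.sqrt (∑ i, (x i)^2) with hnx
    have hcs := hCS x
    have hsum2 : ∑ i, (x i)^2 = nx^2 := (hnx2 x).symm
    have hfxe : (1/2) * nx^2 + (∑ i, b i * x i) + lam1 * nx = -(1/2) * (r - lam1)^2 := by
      rw [hf, hsum2, Real.sqrt_sq (hnx0 x)] at heq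
      exact heq
    have hnxeq : nx = r - lam1 := by
      nlinarith [hnx0 x, sq_nonneg (nx - (r - lam1))]
    have hbx : ∑ i, b i * x i = -(r * (r - lam1)) := by
      nlinarith [hnxeq]
    have hc0 : 0 ≤ c := by
      rw [hc]
      have : lam1 / r ≤ 1 := by rw [div_le_one hrpos]; exact hlr.le
      linarith
    have hcr : c * r = r - lam1 := by rw [hc, sub_mul, div_mul_cancel₀ _ hrpos.ne', one_mul]
    have hzero : ∑ i, (x i + c * b i)^2 = 0 := by
      have hexp : ∑ i, (x i + c * b i)^2
          = (∑ i, (x i)^2) + 2 * c * (∑ i, b i * x i) + c^2 * (∑ i, (b i)^2) := by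
        rw [Finset.mul_sum, Finset.mul_sum, ← Finset.sum_add_distrib, ← Finset.sum_add_distrib]
        exact Finset.sum_congr rfl fun i _ => by ring
      rw [hexp, hsum2, hnxeq, hbx, ← hr2]
      nlinarith [hcr]
    funext i
    have hterm : (x i + c * b i)^2 = 0 := by
      have h := (Finset.sum_eq_zero_iff_of_nonneg (fun j _ => sq_nonneg (x j + c * b j))).1
        hzero i (Finset.mem_univ i)
      exact h
    have : x i + c * b i = 0 := by
      exact pow_eq_zero_iff (n := 2) (by norm_num) |>.1 hterm
    show x i = -c * b i
    linarith
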